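/- Uniqueness theorem for fractional Fourier coefficients: if f, g ∈ e_{-α}L^1(T^n_α) satisfy F_α(f)(m) = F_α(g)(m) for all m ∈ Z^n, then f = g almost everywhere. -/

import Mathlib

open MeasureTheory Filter Set Topology AddCircle
open scoped NNReal
set_option linter.unusedSectionVars false
set_option linter.unusedVariables false
set_option linter.unreachableTactic false
set_option linter.unusedTactic false
set_option maxHeartbeats 1000000

noncomputable section

section Aux

lemma key_ae_zero {X : Type*} [MeasurableSpace X] [MetricSpace X] [CompactSpace X] [BorelSpace X]
    {μ : Measure X} [IsFiniteMeasure μ] {H : X → ℂ} (hH : Integrable H μ)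
    (S : Set C(X, ℂ)) (hdense : (Submodule.span ℂ S).topologicalClosure = ⊤)
    (h0 : ∀ φ ∈ S, ∫ x, φ x * H x ∂μ = 0) : H =ᵐ[μ] 0 := by
  -- integrability against any continuous map
  have hint : ∀ φ : C(X, ℂ), Integrable (fun x => φ x * H x) μ := fun φ =>
    hH.bdd_mul φ.continuous.aestronglyMeasurable (ae_of_all _ fun x => φ.norm_coe_le_norm x)
  -- the continuous linear functional
  let L0 : C(X, ℂ) →ₗ[ℂ] ℂ :=
    { toFun := fun φ => ∫ x, φ x * H x ∂μ
      map_add' := fun φ ψ => by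
        simp only [ContinuousMap.add_apply, add_mul]
        exact integral_add (hint φ) (hint ψ)
      map_smul' := fun c φ => by
        simp only [ContinuousMap.smul_apply, smul_eq_mul, mul_assoc, RingHom.id_apply]
        exact integral_const_mul c _ }
  have hL0 : ∀ φ : C(X, ℂ), ‖L0 φ‖ ≤ (∫ x, ‖H x‖ ∂μ) * ‖φ‖ := by
    intro φ
    calc ‖∫ x, φ x * H x ∂μ‖ ≤ ∫ x, ‖φ x * H x‖ ∂μ := norm_integral_le_integral_norm _
    _ ≤ ∫ x, ‖φ‖ * ‖H x‖ ∂μ := by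
        refine integral_mono (hint φ).norm (hH.norm.const_mul _) fun x => ?_
        rw [norm_mul]
        exact mul_le_mul_of_nonneg_right (φ.norm_coe_le_norm x) (norm_nonneg _)
    _ = (∫ x, ‖H x‖ ∂μ) * ‖φ‖ := by rw [integral_const_mul]; ring
  let L : C(X, ℂ) →L[ℂ] ℂ := LinearMap.mkContinuous L0 _ hL0
  have hLzero : ∀ φ : C(X, ℂ), L φ = 0 := by
    have hker : (Submodule.span ℂ S).topologicalClosure ≤ L.ker := by
      apply Submodule.topologicalClosure_minimal
      · rw [Submodule.span_le]
        intro φ hφ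
        exact h0 φ hφ
      · exact ContinuousLinearMap.isClosed_ker L
    rw [hdense] at hker
    intro φ
    exact hker (Submodule.mem_top) 
  -- now integrals over closed sets vanish
  apply ae_eq_zero_of_forall_setIntegral_isClosed_eq_zero hH
  intro s hs
  obtain ⟨u, -, u_pos, u_lim⟩ : ∃ u : ℕ → ℝ, StrictAnti u ∧ (∀ (k : ℕ), u k ∈ Ioo 0 1)
      ∧ Tendsto u atTop (𝓝 0) := exists_seq_strictAnti_tendsto' one_pos
  set φ : ℕ → X → ℂ := fun k x => ((thickenedIndicator (u_pos k).1 s x : ℝ) : ℂ) with hφ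
  have hφcont : ∀ k, Continuous (φ k) := fun k =>
    Complex.continuous_ofReal.comp <| NNReal.continuous_coe.comp
      (thickenedIndicator (u_pos k).1 s).continuous
  have hφ0 : ∀ k, ∫ x, φ k x * H x ∂μ = 0 := fun k => hLzero ⟨φ k, hφcont k⟩
  have hbound : ∀ k, ∀ᵐ x ∂μ, ‖φ k x * H x‖ ≤ ‖H x‖ := by
    intro k
    filter_upwards with x
    rw [norm_mul]
    have h1 : thickenedIndicator (u_pos k).1 s x ≤ 1 := thickenedIndicator_le_one _ _ _
    have : ‖φ k x‖ ≤ 1 := by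
      simp only [hφ, Complex.norm_real, Real.norm_eq_abs, abs_of_nonneg (NNReal.coe_nonneg _)]
      exact_mod_cast h1
    exact mul_le_of_le_one_left (norm_nonneg _) this
  have hlim : ∀ᵐ x ∂μ, Tendsto (fun k => φ k x * H x) atTop (𝓝 (s.indicator H x)) := by
    filter_upwards with x
    have key := thickenedIndicator_tendsto_indicator_closure (fun k => (u_pos k).1) u_lim s
    rw [tendsto_pi_nhds] at key
    have keyx := key x
    rw [hs.closure_eq] at keyx
    have hcast : Continuous (fun r : ℝ≥0 => ((r : ℝ) : ℂ)) :=
      Complex.continuous_ofReal.comp NNReal.continuous_coe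
    have h2 : Tendsto (fun k => φ k x) atTop
        (𝓝 (((s.indicator (fun _ => (1 : ℝ≥0)) x : ℝ≥0) : ℝ) : ℂ)) :=
      (hcast.continuousAt.tendsto).comp keyx
    have h3 := h2.mul_const (H x)
    convert h3 using 2
    by_cases hx : x ∈ s <;> simp [hx]
  have hmeas : ∀ k, AEStronglyMeasurable (fun x => φ k x * H x) μ := fun k =>
    (hφcont k).aestronglyMeasurable.mul hH.aestronglyMeasurable
  have htend := tendsto_integral_of_dominated_convergence (F := fun k x => φ k x * H x)
    (fun x => ‖H x‖) hmeas hH.norm hbound hlim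
  simp only [hφ0] at htend
  rw [← integral_indicator hs.measurableSet]
  exact (tendsto_const_nhds_iff.mp htend).symm

variable {T : ℝ} [hT : Fact (0 < T)] {n : ℕ}

/-- multi-dimensional Fourier character -/
def mchar (m : Fin n → ℤ) : C((Fin n → AddCircle T), ℂ) :=
  ⟨fun y => ∏ i, fourier (m i) (y i), by
    exact continuous_finset_prod _ fun i _ =>
      (map_continuous (fourier (m i))).comp (continuous_apply i)⟩

lemma mchar_apply (m : Fin n → ℤ) (y : Fin n → AddCircle T) :
    mchar m y = ∏ i, fourier (m i) (y i) := rfl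

lemma mchar_zero : (mchar 0 : C((Fin n → AddCircle T), ℂ)) = 1 := by
  ext y; simp [mchar_apply, fourier_zero]

lemma mchar_mul (m m' : Fin n → ℤ) :
    (mchar (m + m') : C((Fin n → AddCircle T), ℂ)) = mchar m * mchar m' := by
  ext y
  simp only [mchar_apply, ContinuousMap.mul_apply, Pi.add_apply, ← Finset.prod_mul_distrib]
  exact Finset.prod_congr rfl fun i _ => fourier_add

lemma mchar_star (m : Fin n → ℤ) :
    star (mchar m : C((Fin n → AddCircle T), ℂ)) = mchar (-m) := by
  ext y
  simp only [ContinuousMap.star_apply, mchar_apply, starRingEnd_apply, star_prod]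
  exact Finset.prod_congr rfl fun i _ => by
    rw [Pi.neg_apply, fourier_neg, starRingEnd_apply]

/-- the star subalgebra generated by multi-characters -/
def mSubalg (T : ℝ) [Fact (0 < T)] (n : ℕ) : StarSubalgebra ℂ C((Fin n → AddCircle T), ℂ) where
  toSubalgebra := Algebra.adjoin ℂ (range (mchar : (Fin n → ℤ) → C((Fin n → AddCircle T), ℂ)))
  star_mem' := by
    intro x hx
    have hle : Algebra.adjoin ℂ (range (mchar : (Fin n → ℤ) → C((Fin n → AddCircle T), ℂ))) ≤
        star (Algebra.adjoin ℂ (range (mchar : (Fin n → ℤ) → C((Fin n → AddCircle T), ℂ)))) := by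
      refine Algebra.adjoin_le ?_
      rintro - ⟨m, rfl⟩
      rw [SetLike.mem_coe, Subalgebra.mem_star_iff, mchar_star]
      exact Algebra.subset_adjoin ⟨-m, rfl⟩
    exact (Subalgebra.mem_star_iff _ _).1 (hle hx)

lemma mSubalg_coe :
    Subalgebra.toSubmodule (mSubalg T n).toSubalgebra
      = Submodule.span ℂ (range (mchar : (Fin n → ℤ) → C((Fin n → AddCircle T), ℂ))) := by
  apply Algebra.adjoin_eq_span_of_subset
  refine Subset.trans ?_ Submodule.subset_span
  intro x hx
  refine Submonoid.closure_induction (fun _ => id) ⟨0, mchar_zero⟩ ?_ hx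
  rintro - - - - ⟨m, rfl⟩ ⟨m', rfl⟩
  exact ⟨m + m', mchar_mul m m'⟩

lemma mSubalg_separatesPoints : (mSubalg T n).SeparatesPoints := by
  intro y y' hyy'
  obtain ⟨i, hi⟩ : ∃ i, y i ≠ y' i := by
    by_contra hc
    push_neg at hc
    exact hyy' (funext hc)
  refine ⟨_, ⟨mchar (Pi.single i 1), Algebra.subset_adjoin ⟨_, rfl⟩, rfl⟩, ?_⟩
  dsimp only
  have hval : ∀ z : Fin n → AddCircle T, mchar (Pi.single i 1) z = fourier 1 (z i) := by
    intro z
    rw [mchar_apply]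
    rw [Finset.prod_eq_single_of_mem i (Finset.mem_univ i)]
    · rw [Pi.single_eq_same]
    · intro j _ hj
      rw [Pi.single_eq_of_ne hj]
      exact fourier_zero
  rw [hval, hval, fourier_one, fourier_one]
  contrapose! hi
  rw [Circle.coe_inj] at hi
  exact injective_toCircle hT.out.ne' hi

lemma mSubalg_closure_eq_top : (mSubalg T n).topologicalClosure = ⊤ :=
  ContinuousMap.starSubalgebra_topologicalClosure_eq_top_of_separatesPoints _
    mSubalg_separatesPoints

lemma span_mchar_closure_eq_top :
    (Submodule.span ℂ (range (mchar : (Fin n → ℤ) → C((Fin n → AddCircle T), ℂ)))).topologicalClosure = ⊤ := by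
  rw [← mSubalg_coe]
  exact congr_arg (Subalgebra.toSubmodule <| StarSubalgebra.toSubalgebra ·)
    mSubalg_closure_eq_top

lemma pi_restrict_eq {ι : Type*} [Fintype ι] {X : ι → Type*} [∀ i, MeasureSpace (X i)]
    [∀ i, SigmaFinite (volume : Measure (X i))]
    (s : ∀ i, Set (X i)) (hs : ∀ i, MeasurableSet (s i)) :
    Measure.pi (fun i => (volume : Measure (X i)).restrict (s i))
      = (Measure.pi (fun i => (volume : Measure (X i)))).restrict (pi univ s) := by
  apply Measure.pi_eq
  intro t ht
  rw [Measure.restrict_apply (MeasurableSet.univ_pi ht), ← pi_inter_distrib,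
    Measure.pi_pi]
  exact Finset.prod_congr rfl fun i _ => (Measure.restrict_apply (ht i)).symm

lemma measurePreserving_qmap :
    MeasurePreserving (fun (x : Fin n → ℝ) (i : Fin n) => ((x i : AddCircle T)))
      (volume.restrict (pi univ fun _ => Ioc (-(T/2)) (T/2))) volume := by
  have hmk := AddCircle.measurePreserving_mk T (-(T/2))
  have hIoc : -(T/2) + T = T/2 := by ring
  rw [hIoc] at hmk
  have hmeas : Measurable (fun (x : Fin n → ℝ) (i : Fin n) => ((x i : AddCircle T))) :=
    measurable_pi_lambda _ fun i => AddCircle.measurable_mk'.comp (measurable_pi_apply i)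
  refine ⟨hmeas, ?_⟩
  have h1 : (volume : Measure (Fin n → ℝ)).restrict (pi univ fun _ => Ioc (-(T/2)) (T/2))
      = Measure.pi (fun _ : Fin n => volume.restrict (Ioc (-(T/2)) (T/2))) := by
    rw [pi_restrict_eq _ (fun _ => measurableSet_Ioc)]
    rw [volume_pi]
  rw [h1]
  rw [show (volume : Measure (Fin n → AddCircle T)) = Measure.pi (fun _ => volume) from volume_pi]
  symm
  apply Measure.pi_eq
  intro t ht
  rw [Measure.map_apply hmeas (MeasurableSet.univ_pi ht)]
  have h2 : (fun (x : Fin n → ℝ) (i : Fin n) => ((x i : AddCircle T))) ⁻¹' (pi univ t)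
      = pi univ (fun i => (((↑) : ℝ → AddCircle T)) ⁻¹' (t i)) := by
    ext x
    simp [Set.mem_pi]
  rw [h2, Measure.pi_pi]
  exact Finset.prod_congr rfl fun i _ => hmk.measure_preimage (ht i).nullMeasurableSet

instance instFinG : IsFiniteMeasure (volume : Measure (Fin n → AddCircle T)) := by
  constructor
  rw [volume_pi, Measure.pi_univ]
  exact ENNReal.prod_lt_top fun i _ => measure_lt_top _ _

end Aux

/-- The fractional torus, realized as the cube `[-|sin α|/2, |sin α|/2]^n`. -/
def Tor (α : ℝ) (n : ℕ) : Set (Fin n → ℝ) :=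
  Set.univ.pi fun _ => Set.Icc (-(|Real.sin α| / 2)) (|Real.sin α| / 2)

/-- The chirp `e_α(x) = e^{π i |x|² cot α}`. -/
def eA (α : ℝ) {n : ℕ} (x : Fin n → ℝ) : ℂ :=
  Complex.exp (Complex.I * ((Real.pi * (∑ i, x i ^ 2) * (Real.cos α / Real.sin α) : ℝ) : ℂ))

/-- `A_α = √(1 - i cot α)`. -/
def Acoef (α : ℝ) : ℂ := (1 - Complex.I * ((Real.cos α / Real.sin α : ℝ) : ℂ)) ^ (1 / 2 : ℂ)

/-- The kernel `K_α(m,x) = A_α^n e_α(x) e^{-2π i (m·x) csc α} e_α(m)`. -/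
def Kk (α : ℝ) {n : ℕ} (m : Fin n → ℤ) (x : Fin n → ℝ) : ℂ :=
  Acoef α ^ n * eA α x *
    Complex.exp (-(Complex.I * ((2 * Real.pi * (∑ i, (m i : ℝ) * x i) / Real.sin α : ℝ) : ℂ))) *
    eA α fun i => (m i : ℝ)

/-- The `m`-th fractional Fourier coefficient of order `α`. -/
def Fcoef (α : ℝ) {n : ℕ} (f : (Fin n → ℝ) → ℂ) (m : Fin n → ℤ) : ℂ :=
  ∫ x in Tor α n, f x * Kk α m x

/-- `|sin α|`-periodicity in every coordinate. -/
def Per (α : ℝ) {n : ℕ} (f : (Fin n → ℝ) → ℂ) : Prop :=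
  ∀ (x : Fin n → ℝ) (k : Fin n → ℤ), f (fun i => x i + k i * |Real.sin α|) = f x

theorem stmt13 (α : ℝ) (hα : ∀ k : ℤ, α ≠ k * Real.pi) (n : ℕ)
    (f g : (Fin n → ℝ) → ℂ)
    (hperf : Per α fun x => eA α x * f x) (hperg : Per α fun x => eA α x * g x)
    (hf : IntegrableOn (fun x => eA α x * f x) (Tor α n))
    (hg : IntegrableOn (fun x => eA α x * g x) (Tor α n))
    (h : ∀ m : Fin n → ℤ, Fcoef α f m = Fcoef α g m) :
    ∀ᵐ x ∂(volume.restrict (Tor α n)), f x = g x := by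

  have hsin : Real.sin α ≠ 0 :=
    Real.sin_ne_zero_iff.mpr fun k hk => hα k hk.symm
  set s : ℝ := |Real.sin α| with hsdef
  have hs : 0 < s := abs_pos.mpr hsin
  haveI : Fact (0 < s) := ⟨hs⟩
  have hEnd : -(s/2) + s = s/2 := by ring
  -- the difference function
  set d : (Fin n → ℝ) → ℂ := fun x => eA α x * f x - eA α x * g x with hddef
  have hd : IntegrableOn d (Tor α n) := hf.sub hg
  -- the Ioc box
  set B : Set (Fin n → ℝ) := pi univ (fun _ : Fin n => Ioc (-(s/2)) (s/2)) with hBdef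
  have hBmeas : MeasurableSet B := MeasurableSet.univ_pi fun _ => measurableSet_Ioc
  have hBsub : B ⊆ Tor α n := fun x hx i hi => Ioc_subset_Icc_self (hx i hi)
  have hae : B =ᵐ[volume] Tor α n := by
    rw [MeasureTheory.ae_eq_set]
    have h1 : volume (Tor α n \ B) = 0 := by
      have hsub2 : Tor α n \ B ⊆ ⋃ i : Fin n, {x : Fin n → ℝ | x i = -(s/2)} := by
        rintro x ⟨hx1, hx2⟩
        obtain ⟨i, hi⟩ : ∃ i, x i ∉ Ioc (-(s/2)) (s/2) := by
          by_contra hc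
          push_neg at hc
          exact hx2 fun i _ => hc i
        have hxi := hx1 i (mem_univ i)
        simp only [Set.mem_Icc] at hxi
        simp only [Set.mem_Ioc, not_and_or, not_lt, not_le] at hi
        rcases hi with hi | hi
        · exact mem_iUnion.2 ⟨i, le_antisymm hi hxi.1⟩
        · exact absurd hxi.2 (not_le.2 hi)
      refine measure_mono_null hsub2 (measure_iUnion_null fun i => ?_)
      have heq : {x : Fin n → ℝ | x i = -(s/2)}
          = pi univ (Function.update (fun _ : Fin n => (univ : Set ℝ)) i {-(s/2)}) := by
        ext x
        simp only [mem_setOf_eq, Set.mem_pi, mem_univ, forall_true_left]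
        constructor
        · intro hx j
          rcases eq_or_ne j i with rfl | hj
          · simp [Function.update_self, hx]
          · simp [Function.update_of_ne hj]
        · intro hx
          have := hx i
          simpa [Function.update_self] using this
      rw [heq, volume_pi_pi]
      refine Finset.prod_eq_zero (Finset.mem_univ i) ?_
      simp [Function.update_self]
    have h2 : volume (B \ Tor α n) = 0 := by
      rw [diff_eq_empty.mpr hBsub]; exact measure_empty
    exact ⟨h2, h1⟩
  have hrestrict : volume.restrict B = volume.restrict (Tor α n) :=
    Measure.restrict_congr_set hae
  -- exponentials
  set E : (Fin n → ℤ) → (Fin n → ℝ) → ℂ := fun m x =>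
    Complex.exp (-(Complex.I * ((2 * Real.pi * (∑ i, (m i : ℝ) * x i) / Real.sin α : ℝ) : ℂ)))
    with hEdef
  have hEcont : ∀ m, Continuous (E m) := by
    intro m
    apply Complex.continuous_exp.comp
    apply Continuous.neg
    refine continuous_const.mul (Complex.continuous_ofReal.comp ?_)
    exact ((continuous_const.mul
      (continuous_finset_sum _ fun i _ => continuous_const.mul (continuous_apply i))).div_const _)
  have hEnorm : ∀ m x, ‖E m x‖ = 1 := by
    intro m x
    simp only [hEdef]
    generalize (2 * Real.pi * (∑ i, (m i : ℝ) * x i) / Real.sin α : ℝ) = r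
    rw [Complex.norm_exp]
    simp [Complex.mul_re]
  have hintE : ∀ (m : Fin n → ℤ) (u : (Fin n → ℝ) → ℂ),
      IntegrableOn (fun x => eA α x * u x) (Tor α n) →
      IntegrableOn (fun x => E m x * (eA α x * u x)) (Tor α n) := by
    intro m u hu
    exact hu.bdd_mul (hEcont m).aestronglyMeasurable (ae_of_all _ fun x => le_of_eq (hEnorm m x))
  -- rewrite the coefficients
  have hA : Acoef α ≠ 0 := by
    intro hz
    rw [Acoef, Complex.cpow_eq_zero_iff] at hz
    have h1 := hz.1
    generalize hgen : (Real.cos α / Real.sin α : ℝ) = c at h1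
    have h2 := congrArg Complex.re h1
    simp [Complex.mul_re] at h2
  have hFc : ∀ (u : (Fin n → ℝ) → ℂ) (m : Fin n → ℤ), Fcoef α u m
      = (Acoef α ^ n * eA α (fun i => (m i : ℝ))) *
        ∫ x in Tor α n, E m x * (eA α x * u x) := by
    intro u m
    rw [Fcoef, ← integral_const_mul]
    apply integral_congr_ae
    filter_upwards with x
    simp only [hEdef, Kk]
    ring
  have hcoef : ∀ m : Fin n → ℤ, ∫ x in Tor α n, E m x * d x = 0 := by
    intro m
    have hc : (Acoef α ^ n * eA α (fun i => (m i : ℝ))) ≠ 0 :=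
      mul_ne_zero (pow_ne_zero _ hA) (Complex.exp_ne_zero _)
    have h2 := h m
    rw [hFc f m, hFc g m] at h2
    have h3 := mul_left_cancel₀ hc h2
    have h4 : ∫ x in Tor α n,
        (E m x * (eA α x * f x) - E m x * (eA α x * g x)) = 0 := by
      rw [integral_sub (hintE m f hf) (hintE m g hg), h3, sub_self]
    rw [← h4]
    apply integral_congr_ae
    filter_upwards with x
    simp only [hddef]
    ring
  -- sign adjustment
  set sg : (Fin n → ℤ) → (Fin n → ℤ) := fun m i => if 0 < Real.sin α then -(m i) else m i
    with hsgdef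
  have hchar : ∀ (m : Fin n → ℤ) (x : Fin n → ℝ),
      (mchar (T := s) m) (fun i => ((x i : ℝ) : AddCircle s)) = E (sg m) x := by
    intro m x
    rw [mchar_apply]
    have hfi : ∀ i : Fin n, fourier (m i) ((x i : ℝ) : AddCircle s)
        = Complex.exp (2 * Real.pi * Complex.I * (m i) * (x i) / s) :=
      fun i => fourier_coe_apply
    simp only [hfi, ← Complex.exp_sum, hEdef]
    congr 1
    have hL : (∑ i, 2 * (Real.pi : ℂ) * Complex.I * (m i : ℂ) * (x i : ℂ) / (s : ℂ))
        = (2 * (Real.pi : ℂ) * Complex.I / (s : ℂ)) * ((∑ i, (m i : ℝ) * x i : ℝ) : ℂ) := by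
      push_cast
      rw [Finset.mul_sum]
      exact Finset.sum_congr rfl fun i _ => by ring
    have hS : (∑ i, ((sg m) i : ℝ) * x i)
        = (if 0 < Real.sin α then (-1 : ℝ) else 1) * ∑ i, (m i : ℝ) * x i := by
      rw [Finset.mul_sum]
      refine Finset.sum_congr rfl fun i _ => ?_
      by_cases hp : 0 < Real.sin α <;> simp [hsgdef, hp] <;> push_cast <;> ring
    rw [hL, hS]
    rcases lt_or_gt_of_ne hsin with hneg | hpos
    · have hsa : s = -Real.sin α := by rw [hsdef, abs_of_neg hneg]
      rw [if_neg (not_lt.2 hneg.le), hsa]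
      push_cast
      have : (Real.sin α : ℂ) ≠ 0 := Complex.ofReal_ne_zero.mpr hsin
      field_simp
    · have hsa : s = Real.sin α := by rw [hsdef, abs_of_pos hpos]
      rw [if_pos hpos, hsa]
      push_cast
      have : (Real.sin α : ℂ) ≠ 0 := Complex.ofReal_ne_zero.mpr hsin
      field_simp
  -- quotient map
  set q : (Fin n → ℝ) → (Fin n → AddCircle s) := fun x i => ((x i : ℝ) : AddCircle s) with hqdef
  have hmp : MeasurePreserving q (volume.restrict B) volume := measurePreserving_qmap
  have hcoefχ : ∀ m' : Fin n → ℤ, ∫ x in B, (mchar (T := s) m') (q x) * d x = 0 := by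
    intro m'
    have := hcoef (sg m')
    rw [← hrestrict] at this
    rw [← this]
    apply integral_congr_ae
    filter_upwards with x
    rw [hqdef, hchar]
  -- the section ρ
  set ρ : (Fin n → AddCircle s) → (Fin n → ℝ) := fun y i => ((equivIoc s (-(s/2)) (y i) : ℝ)) with hρdef
  have hρmeas : Measurable ρ := by
    apply measurable_pi_lambda
    intro i
    exact measurable_subtype_coe.comp
      ((AddCircle.measurableEquivIoc s (-(s/2))).measurable.comp (measurable_pi_apply i))
  have hρq : ∀ x ∈ B, ρ (q x) = x := by
    intro x hx
    funext i
    have hxi : x i ∈ Ioc (-(s/2)) (-(s/2) + s) := by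
      rw [hEnd]; exact hx i (mem_univ i)
    have heq : equivIoc s (-(s/2)) ((x i : ℝ) : AddCircle s) = ⟨x i, hxi⟩ := by
      rw [Equiv.apply_eq_iff_eq_symm_apply]; rfl
    simp only [hρdef, hqdef, heq]
  set H : (Fin n → AddCircle s) → ℂ := d ∘ ρ with hHdef
  have hHqae : H ∘ q =ᵐ[volume.restrict B] d := by
    filter_upwards [ae_restrict_mem hBmeas] with x hx
    simp only [hHdef, Function.comp_apply, hρq x hx]
  have hdB : Integrable d (volume.restrict B) := by
    rw [hrestrict]; exact hd
  have hρmp : MeasurePreserving ρ volume (volume.restrict B) := by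
    refine ⟨hρmeas, ?_⟩
    rw [← hmp.map_eq, Measure.map_map hρmeas hmp.measurable]
    have hid : ρ ∘ q =ᵐ[volume.restrict B] id := by
      filter_upwards [ae_restrict_mem hBmeas] with x hx using hρq x hx
    rw [Measure.map_congr hid, Measure.map_id]
  have hHaesm : AEStronglyMeasurable H volume :=
    hdB.aestronglyMeasurable.comp_quasiMeasurePreserving hρmp.quasiMeasurePreserving
  have hHint : Integrable H volume := by
    rw [← hmp.integrable_comp hHaesm]
    exact hdB.congr hHqae.symm
  have hG0 : ∀ m' : Fin n → ℤ, ∫ y, (mchar (T := s) m') y * H y = 0 := by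
    intro m'
    have haesm2 : AEStronglyMeasurable (fun y => (mchar (T := s) m') y * H y) volume :=
      (map_continuous (mchar (T := s) m')).aestronglyMeasurable.mul hHaesm
    rw [← hmp.map_eq,
      integral_map hmp.measurable.aemeasurable (by rw [hmp.map_eq]; exact haesm2)]
    rw [← hcoefχ m']
    apply integral_congr_ae
    filter_upwards [hHqae] with x hx
    rw [show H (q x) = (H ∘ q) x from rfl, hx]
  have hH0 : H =ᵐ[volume] (0 : (Fin n → AddCircle s) → ℂ) :=
    key_ae_zero hHint (range (mchar : (Fin n → ℤ) → C((Fin n → AddCircle s), ℂ)))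
      span_mchar_closure_eq_top (by rintro φ ⟨m', rfl⟩; exact hG0 m')
  have hd0 : d =ᵐ[volume.restrict B] 0 := by
    have h1 : H ∘ q =ᵐ[volume.restrict B] (0 : (Fin n → AddCircle s) → ℂ) ∘ q := by
      apply ae_eq_comp hmp.measurable.aemeasurable
      rwa [hmp.map_eq]
    exact hHqae.symm.trans h1
  rw [← hrestrict]
  filter_upwards [hd0] with x hx
  have hne : eA α x ≠ 0 := Complex.exp_ne_zero _
  have hz : eA α x * (f x - g x) = 0 := by
    rw [mul_sub]
    simpa only [hddef, Pi.zero_apply] using hx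
  rcases mul_eq_zero.1 hz with h1 | h2
  · exact absurd h1 hne
  · exact sub_eq_zero.1 h2
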